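/- Let l be a 3×3 lower unitriangular matrix with subdiagonal entries l_{21}, l_{31}, l_{32} and u a 3×3 upper unitriangular matrix with entries u_{12}, u_{13}, u_{23}, and suppose D := 1 + l_{31}u_{13} − l_{21}l_{32}u_{13} ≠ 0. Define ζ_3⁻ = l_{32}, ζ_2⁻ = l_{31} − l_{21}l_{32}, ζ_1⁻ = (l_{21} − l_{31}u_{23} + l_{21}l_{32}u_{23})/D, ζ_3⁺ = (l_{21}u_{13} + u_{23})/D, ζ_2⁺ = u_{13}, ζ_1⁺ = u_{12}. Then F(ζ_1,ζ_2,ζ_3) = l·u. -/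

import Mathlib

open Matrix

noncomputable section

/-- The matrix unit `E_{a b}` (1-indexed) in `gl(n, ℂ)`. -/
def Emat (n a b : ℕ) : Matrix (Fin n) (Fin n) ℂ :=
  Matrix.of fun i j => if (i : ℕ) + 1 = a ∧ (j : ℕ) + 1 = b then 1 else 0

/-- `i_{(p,q)}(ζ) = I + ζ⁻ E_{q p} + ζ⁺ E_{p q} + ζ⁻ ζ⁺ E_{q q}`. -/
def iMat (n : ℕ) (t : ℕ × ℕ) (z : ℂ × ℂ) : Matrix (Fin n) (Fin n) ℂ :=
  1 + z.1 • Emat n t.2 t.1 + z.2 • Emat n t.1 t.2 + (z.1 * z.2) • Emat n t.2 t.2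

/-- The forward map for the reduced factorization `w₀ = s₁s₂s₁` of the longest element of
`S₃` (ordering `τ₁ = (1,2)`, `τ₂ = (1,3)`, `τ₃ = (2,3)`). -/
def F3 (z1 z2 z3 : ℂ × ℂ) : Matrix (Fin 3) (Fin 3) ℂ :=
  iMat 3 (2, 3) z3 * iMat 3 (1, 3) z2 * iMat 3 (1, 2) z1

/-- the rational inverse of the forward map in standard coordinates: given
unitriangular `l`, `u` with `D = 1 + l₃₁u₁₃ − l₂₁l₃₂u₁₃ ≠ 0`, the indicated root subgroup
coordinates `ζ₁ = (ζ₁⁻, ζ₁⁺)`, `ζ₂ = (ζ₂⁻, ζ₂⁺)`, `ζ₃ = (ζ₃⁻, ζ₃⁺)` satisfy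
`F(ζ₁, ζ₂, ζ₃) = l · u`. -/
theorem stmt11 (l21 l31 l32 u12 u13 u23 : ℂ)
    (hD : 1 + l31 * u13 - l21 * l32 * u13 ≠ 0) :
    F3 ((l21 - l31 * u23 + l21 * l32 * u23) / (1 + l31 * u13 - l21 * l32 * u13), u12)
       (l31 - l21 * l32, u13)
       (l32, (l21 * u13 + u23) / (1 + l31 * u13 - l21 * l32 * u13)) =
    !![(1 : ℂ), 0, 0; l21, 1, 0; l31, l32, 1] *
      !![(1 : ℂ), u12, u13; 0, 1, u23; 0, 0, 1] := by
  have hD1 : 1 + u13 * l31 - l21 * u13 * l32 ≠ 0 := fun h => hD (by linear_combination h)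
  have hD2 : 1 + u13 * l31 - l32 * l21 * u13 ≠ 0 := fun h => hD (by linear_combination h)
  ext i j
  fin_cases i <;> fin_cases j <;>
    simp [F3, iMat, Emat, Matrix.mul_apply, Fin.sum_univ_succ, Matrix.one_apply] <;>
    all_goals (field_simp; first | (left; first | trivial | ring) | ring)
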